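/- Let E be an equivalence relation on a non-empty Polish space S. If E (viewed as a subset of S × S) is meagre, then there exist uncountably many (indeed continuum many) pairwise E-inequivalent elements of S; more precisely, there is a non-empty perfect subset P ⊆ S such that no two distinct elements of P are E-related. -/

import Mathlib

open Set Metric Topology Filter

section Aux

/-- Dependent-choice style chain construction. -/
lemma mycielski_exists_chain {α : Type*} (P : ℕ → α → Prop) (R : ℕ → α → α → Prop)
    (x0 : α) (h0 : P 0 x0)
    (step : ∀ n x, P n x → ∃ y, P (n + 1) y ∧ R n x y) :
    ∃ u : ℕ → α, (∀ n, P n (u n)) ∧ ∀ n, R n (u n) (u (n + 1)) := by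
  choose f hf1 hf2 using step
  let u : (n : ℕ) → {x : α // P n x} := fun n =>
    Nat.rec ⟨x0, h0⟩ (fun m p => ⟨f m p.1 p.2, hf1 m p.1 p.2⟩) n
  exact ⟨fun n => (u n).1, fun n => (u n).2, fun n => hf2 n (u n).1 (u n).2⟩

variable {S : Type*} [TopologicalSpace S]

/-- Shrink a pair of nonempty open sets so that their product avoids a closed set
with dense complement. -/
lemma mycielski_shrink_pair {A B : Set S} (hA : IsOpen A) (hAne : A.Nonempty)
    (hB : IsOpen B) (hBne : B.Nonempty)
    {G : Set (S × S)} (hGc : IsClosed G) (hGd : Dense Gᶜ) :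
    ∃ A' B' : Set S, IsOpen A' ∧ A'.Nonempty ∧ A' ⊆ A ∧ IsOpen B' ∧ B'.Nonempty ∧ B' ⊆ B ∧
      ∀ x ∈ A', ∀ y ∈ B', (x, y) ∉ G := by
  obtain ⟨p, hp, hpG⟩ := hGd.inter_open_nonempty (A ×ˢ B) (hA.prod hB) (hAne.prod hBne)
  obtain ⟨u, v, hu, hv, hpu, hpv, huv⟩ := isOpen_prod_iff.mp (hGc.isOpen_compl) p.1 p.2 hpG
  refine ⟨A ∩ u, B ∩ v, hA.inter hu, ⟨p.1, hp.1, hpu⟩, inter_subset_left,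
    hB.inter hv, ⟨p.2, hp.2, hpv⟩, inter_subset_left, ?_⟩
  intro x hx y hy hxy
  exact huv (mk_mem_prod hx.2 hy.2) hxy

/-- Shrink a finite family of nonempty open sets so that all products over a finite set
of index pairs avoid a closed set with dense complement. -/
lemma mycielski_shrink_finset {ι : Type*} [DecidableEq ι] (Q : Finset (ι × ι))
    (V : ι → Set S) (hV : ∀ i, IsOpen (V i) ∧ (V i).Nonempty)
    {G : Set (S × S)} (hGc : IsClosed G) (hGd : Dense Gᶜ) :
    ∃ W : ι → Set S, (∀ i, IsOpen (W i) ∧ (W i).Nonempty ∧ W i ⊆ V i) ∧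
      ∀ p ∈ Q, p.1 ≠ p.2 → ∀ x ∈ W p.1, ∀ y ∈ W p.2, (x, y) ∉ G := by
  classical
  induction Q using Finset.induction_on with
  | empty => exact ⟨V, fun i => ⟨(hV i).1, (hV i).2, subset_rfl⟩, by simp⟩
  | insert _ _ hq ih =>
    rename_i q Q'
    obtain ⟨W, hW, hWsep⟩ := ih
    by_cases hqq : q.1 = q.2
    · exact ⟨W, hW, by
        intro p hp hpne
        rcases Finset.mem_insert.mp hp with rfl | hp
        · exact absurd hqq hpne
        · exact hWsep p hp hpne⟩
    · obtain ⟨A', B', hA'o, hA'ne, hA'sub, hB'o, hB'ne, hB'sub, hsep⟩ :=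
        mycielski_shrink_pair (hW q.1).1 (hW q.1).2.1 (hW q.2).1 (hW q.2).2.1 hGc hGd
      set W' : ι → Set S := fun i => if i = q.1 then A' else if i = q.2 then B' else W i with hW'
      have hsub : ∀ i, W' i ⊆ W i := by
        intro i
        simp only [hW']
        split_ifs with h1 h2
        · rw [h1]; exact hA'sub
        · rw [h2]; exact hB'sub
        · exact subset_rfl
      refine ⟨W', ?_, ?_⟩
      · intro i
        refine ⟨?_, ?_, (hsub i).trans (hW i).2.2⟩
        · simp only [hW']; split_ifs <;> first | exact hA'o | exact hB'o | exact (hW i).1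
        · simp only [hW']; split_ifs <;> first | exact hA'ne | exact hB'ne | exact (hW i).2.1
      · intro p hp hpne x hx y hy
        rcases Finset.mem_insert.mp hp with rfl | hp
        · have hx' : x ∈ A' := by simpa only [hW', if_pos rfl] using hx
          have hy' : y ∈ B' := by
            simpa only [hW', if_neg (Ne.symm hqq), if_pos rfl, ↓reduceIte] using hy
          exact hsep x hx' y hy'
        · exact hWsep p hp hpne x (hsub p.1 hx) y (hsub p.2 hy)

end Aux

/-- Complement of a finite union of sets with open dense complements is dense. -/
lemma mycielski_dense_compl_biUnion {X : Type*} [TopologicalSpace X] (t : Finset ℕ)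
    (A : ℕ → Set X) (h : ∀ i, IsOpen (A i)ᶜ ∧ Dense (A i)ᶜ) :
    Dense (⋃ i ∈ t, A i)ᶜ := by
  classical
  induction t using Finset.induction_on with
  | empty => simpa using dense_univ
  | insert _ _ hq ih =>
    rename_i a t
    rw [Finset.set_biUnion_insert, Set.compl_union]
    exact ((h a).2).inter_of_isOpen_left ih (h a).1

/-- Mycielski's theorem: a meagre equivalence relation on a
non-empty Polish space admits a non-empty perfect set of pairwise
inequivalent elements. -/
theorem mycielski {S : Type*} [TopologicalSpace S] [PolishSpace S] [Nonempty S]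
    (E : S → S → Prop) (hE : Equivalence E)
    (hmeagre : IsMeagre {p : S × S | E p.1 p.2}) :
    ∃ P : Set S, P.Nonempty ∧ Perfect P ∧
      ∀ x ∈ P, ∀ y ∈ P, x ≠ y → ¬ E x y := by
  classical
  letI := TopologicalSpace.upgradeIsCompletelyMetrizable S
  -- Step 1: an increasing sequence of closed sets with dense complements covering E
  obtain ⟨T, hTnd, hTc, hTsub⟩ := isMeagre_iff_countable_union_isNowhereDense.mp hmeagre
  obtain ⟨g, hg⟩ := (hTc.insert ∅).exists_eq_range (Set.insert_nonempty _ _)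
  set F : ℕ → Set (S × S) := fun n => ⋃ i ∈ Finset.range (n + 1), closure (g i) with hFdef
  have hgnd : ∀ i, IsNowhereDense (g i) := by
    intro i
    have hmem : g i ∈ insert ∅ T := by rw [hg]; exact Set.mem_range_self i
    rcases hmem with h | h
    · rw [h]; exact isNowhereDense_empty
    · exact hTnd _ h
  have hFc : ∀ n, IsClosed (F n) := by
    intro n
    exact Set.Finite.isClosed_biUnion (Finset.range (n + 1)).finite_toSet
      (fun i _ => isClosed_closure)
  have hFd : ∀ n, Dense (F n)ᶜ := by
    intro n
    refine mycielski_dense_compl_biUnion _ _ (fun i => ?_)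
    have := isClosed_isNowhereDense_iff_compl.mp ⟨isClosed_closure, (hgnd i).closure⟩
    exact ⟨this.1, this.2⟩
  have hFmono : ∀ n m, n ≤ m → F n ⊆ F m := by
    intro n m hnm p hp
    simp only [hFdef, Set.mem_iUnion, Finset.mem_range] at hp ⊢
    obtain ⟨i, hi, hpi⟩ := hp
    exact ⟨i, by omega, hpi⟩
  have hcover : {p : S × S | E p.1 p.2} ⊆ ⋃ n, F n := by
    intro p hp
    have h1 : p ∈ ⋃₀ insert ∅ T := Set.sUnion_mono (Set.subset_insert _ _) (hTsub hp)
    obtain ⟨t, ht, hpt⟩ := h1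
    rw [hg] at ht
    obtain ⟨i, rfl⟩ := ht
    exact Set.mem_iUnion.mpr ⟨i, Set.mem_biUnion (Finset.self_mem_range_succ i)
      (subset_closure hpt)⟩
  -- Step 2: the Cantor scheme, built by dependent choice
  set Good : ℕ → ((ℕ → Bool) → S) × ((ℕ → Bool) → ℝ) → Prop := fun n p =>
    (∀ a b : ℕ → Bool, (∀ i, i < n → a i = b i) → p.1 a = p.1 b ∧ p.2 a = p.2 b) ∧
    (∀ a, 0 < p.2 a) ∧ (∀ a, p.2 a ≤ (2⁻¹ : ℝ) ^ n) ∧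
    (∀ a b : ℕ → Bool, (∃ i, i < n ∧ a i ≠ b i) →
      ∀ x ∈ Metric.closedBall (p.1 a) (p.2 a), ∀ y ∈ Metric.closedBall (p.1 b) (p.2 b),
        (x, y) ∉ F n)
    with hGoodDef
  set Link : ℕ → ((ℕ → Bool) → S) × ((ℕ → Bool) → ℝ) →
      ((ℕ → Bool) → S) × ((ℕ → Bool) → ℝ) → Prop := fun _ p q =>
    ∀ a, Metric.closedBall (q.1 a) (q.2 a) ⊆ Metric.closedBall (p.1 a) (p.2 a) with hLinkDef
  obtain ⟨x0⟩ := (inferInstance : Nonempty S)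
  have hbase : Good 0 (fun _ => x0, fun _ => 1) := by
    refine ⟨fun a b _ => ⟨rfl, rfl⟩, fun a => one_pos, fun a => by norm_num, ?_⟩
    rintro a b ⟨i, hi, -⟩
    omega
  have hstep : ∀ n p, Good n p → ∃ q, Good (n + 1) q ∧ Link n p q := by
    intro n p hp
    obtain ⟨hcoh, hpos, hbnd, -⟩ := hp
    set ext : (Fin (n + 1) → Bool) → (ℕ → Bool) :=
      fun s i => if h : i < n + 1 then s ⟨i, h⟩ else false with hextDef
    set V : (Fin (n + 1) → Bool) → Set S :=
      fun s => Metric.ball (p.1 (ext s)) (p.2 (ext s)) with hVdef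
    have hVo : ∀ s, IsOpen (V s) ∧ (V s).Nonempty :=
      fun s => ⟨Metric.isOpen_ball, Metric.nonempty_ball.mpr (hpos _)⟩
    obtain ⟨W, hW, hWsep⟩ := mycielski_shrink_finset Finset.univ V hVo (hFc (n + 1)) (hFd (n + 1))
    choose cpt hcpt using fun s => (hW s).2.1
    have hball : ∀ s, ∃ ε > 0, Metric.ball (cpt s) ε ⊆ W s :=
      fun s => Metric.isOpen_iff.mp (hW s).1 _ (hcpt s)
    choose ep hεpos hεsub using hball
    set rad : (Fin (n + 1) → Bool) → ℝ :=
      fun s => min (ep s / 2) ((2⁻¹ : ℝ) ^ (n + 1)) with hradDef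
    have hradpos : ∀ s, 0 < rad s := fun s => lt_min (half_pos (hεpos s)) (by positivity)
    have hradsub : ∀ s, Metric.closedBall (cpt s) (rad s) ⊆ W s := by
      intro s
      refine (Metric.closedBall_subset_ball ?_).trans (hεsub s)
      exact lt_of_le_of_lt (min_le_left _ _) (half_lt_self (hεpos s))
    set restr : (ℕ → Bool) → (Fin (n + 1) → Bool) := fun a i => a i with hrestrDef
    refine ⟨(fun a => cpt (restr a), fun a => rad (restr a)), ⟨?_, ?_, ?_, ?_⟩, ?_⟩
    · intro a b hab
      have hr : restr a = restr b := funext fun i => hab i i.2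
      exact ⟨by simp only [hr], by simp only [hr]⟩
    · exact fun a => hradpos _
    · exact fun a => min_le_right _ _
    · rintro a b ⟨i, hi, hne⟩ x hx y hy
      have hne' : restr a ≠ restr b := by
        intro h
        exact hne (congrFun h ⟨i, hi⟩)
      exact hWsep (restr a, restr b) (Finset.mem_univ _) hne' x (hradsub _ hx) y (hradsub _ hy)
    · intro a
      have h1 : Metric.closedBall (cpt (restr a)) (rad (restr a)) ⊆ V (restr a) :=
        (hradsub _).trans (hW _).2.2
      have h2 : p.1 (ext (restr a)) = p.1 a ∧ p.2 (ext (restr a)) = p.2 a := by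
        refine hcoh _ _ (fun i hi => ?_)
        have hi' : i < n + 1 := Nat.lt_succ_of_lt hi
        simp only [hextDef, hrestrDef, dif_pos hi']
      refine h1.trans ?_
      have hVeq : V (restr a) = Metric.ball (p.1 a) (p.2 a) := by
        simp only [hVdef, h2.1, h2.2]
      rw [hVeq]
      exact Metric.ball_subset_closedBall
  obtain ⟨u, hGood, hLink⟩ := mycielski_exists_chain Good Link _ hbase hstep
  set c : ℕ → (ℕ → Bool) → S := fun n a => (u n).1 a with hcDef
  set r : ℕ → (ℕ → Bool) → ℝ := fun n a => (u n).2 a with hrDef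
  have hrpos : ∀ n a, 0 < r n a := fun n a => (hGood n).2.1 a
  have hrle : ∀ n a, r n a ≤ (2⁻¹ : ℝ) ^ n := fun n a => (hGood n).2.2.1 a
  have hKanti : ∀ a : ℕ → Bool, Antitone (fun n => Metric.closedBall (c n a) (r n a)) := by
    intro a
    exact antitone_nat_of_succ_le (fun n => hLink n a)
  have hmem : ∀ (a : ℕ → Bool) (n m : ℕ), n ≤ m →
      c m a ∈ Metric.closedBall (c n a) (r n a) := by
    intro a n m hnm
    exact hKanti a hnm (Metric.mem_closedBall_self (hrpos m a).le)
  have htend0 : Filter.Tendsto (fun N : ℕ => 2 * (2⁻¹ : ℝ) ^ N) atTop (nhds 0) := by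
    have := (tendsto_pow_atTop_nhds_zero_of_lt_one (by norm_num : (0:ℝ) ≤ 2⁻¹)
      (by norm_num : (2⁻¹ : ℝ) < 1)).const_mul (2 : ℝ)
    simpa using this
  have hcauchy : ∀ a : ℕ → Bool, CauchySeq (fun n => c n a) := by
    intro a
    refine cauchySeq_of_le_tendsto_0 (fun N => 2 * (2⁻¹ : ℝ) ^ N) ?_ htend0
    intro n m N hn hm
    have h1 : dist (c n a) (c N a) ≤ r N a := Metric.mem_closedBall.mp (hmem a N n hn)
    have h2 : dist (c m a) (c N a) ≤ r N a := Metric.mem_closedBall.mp (hmem a N m hm)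
    calc dist (c n a) (c m a) ≤ dist (c n a) (c N a) + dist (c m a) (c N a) :=
          dist_triangle_right _ _ _
      _ ≤ r N a + r N a := add_le_add h1 h2
      _ ≤ (2⁻¹ : ℝ) ^ N + (2⁻¹ : ℝ) ^ N := add_le_add (hrle N a) (hrle N a)
      _ = 2 * (2⁻¹ : ℝ) ^ N := by ring
  have hlim : ∀ a : ℕ → Bool, ∃ x, Filter.Tendsto (fun n => c n a) atTop (nhds x) :=
    fun a => cauchySeq_tendsto_of_complete (hcauchy a)
  choose f hf using hlim
  have hfK : ∀ (a : ℕ → Bool) (n : ℕ), f a ∈ Metric.closedBall (c n a) (r n a) := by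
    intro a n
    exact Metric.isClosed_closedBall.mem_of_tendsto (hf a)
      (Filter.eventually_atTop.mpr ⟨n, fun m hm => hmem a n m hm⟩)
  have hclose : ∀ (a b : ℕ → Bool) (n : ℕ), (∀ i, i < n → a i = b i) →
      dist (f a) (f b) ≤ 2 * (2⁻¹ : ℝ) ^ n := by
    intro a b n hab
    obtain ⟨hc1, hr1⟩ := (hGood n).1 a b hab
    have h1 : dist (f a) (c n a) ≤ r n a := Metric.mem_closedBall.mp (hfK a n)
    have hc1' : c n a = c n b := hc1
    have hr1' : r n a = r n b := hr1
    have h2 : dist (f b) (c n a) ≤ r n a := by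
      have h3 := Metric.mem_closedBall.mp (hfK b n)
      rwa [← hc1', ← hr1'] at h3
    calc dist (f a) (f b) ≤ dist (f a) (c n a) + dist (f b) (c n a) := dist_triangle_right _ _ _
      _ ≤ r n a + r n a := add_le_add h1 h2
      _ ≤ (2⁻¹ : ℝ) ^ n + (2⁻¹ : ℝ) ^ n := add_le_add (hrle n a) (hrle n a)
      _ = 2 * (2⁻¹ : ℝ) ^ n := by ring
  have hsepF : ∀ a b : ℕ → Bool, a ≠ b → ∀ n, (f a, f b) ∉ F n := by
    intro a b hab n
    obtain ⟨m, hm⟩ := Function.ne_iff.mp hab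
    have hN : (f a, f b) ∉ F (max n (m + 1)) := by
      refine (hGood (max n (m + 1))).2.2.2 a b
        ⟨m, lt_of_lt_of_le (Nat.lt_succ_self m) (le_max_right _ _), hm⟩
        (f a) (hfK a _) (f b) (hfK b _)
    exact fun h => hN (hFmono _ _ (le_max_left _ _) h)
  have hnE : ∀ a b : ℕ → Bool, a ≠ b → ¬ E (f a) (f b) := by
    intro a b hab hEab
    obtain ⟨_, ⟨n, rfl⟩, hn⟩ := hcover (show (f a, f b) ∈ {p : S × S | E p.1 p.2} from hEab)
    exact hsepF a b hab n hn
  have hinj : Function.Injective f := by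
    intro a b h
    by_contra hab
    exact hnE a b hab (h ▸ hE.refl (f a))
  have hcont : Continuous f := by
    rw [continuous_iff_continuousAt]
    intro a
    rw [ContinuousAt, Metric.tendsto_nhds]
    intro ev hev
    obtain ⟨n, hn⟩ : ∃ n : ℕ, (2⁻¹ : ℝ) ^ n < ev / 2 :=
      exists_pow_lt_of_lt_one (by linarith) (by norm_num)
    have hU : {b : ℕ → Bool | ∀ i, i < n → b i = a i} ∈ nhds a := by
      have heq : {b : ℕ → Bool | ∀ i, i < n → b i = a i} =
          ⋂ i ∈ Finset.range n, {b : ℕ → Bool | b i = a i} := by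
        ext b; simp [Finset.mem_range]
      rw [heq]
      refine (Filter.biInter_finset_mem _).mpr (fun i _ => ?_)
      have hcontap : Continuous (fun b : ℕ → Bool => b i) := continuous_apply i
      have hop : IsOpen {b : ℕ → Bool | b i = a i} := by
        have hpre : {b : ℕ → Bool | b i = a i} = (fun b : ℕ → Bool => b i) ⁻¹' {a i} := rfl
        rw [hpre]
        exact hcontap.isOpen_preimage _ (isOpen_discrete _)
      exact IsOpen.mem_nhds hop rfl
    filter_upwards [hU] with b hb
    calc dist (f b) (f a) ≤ 2 * (2⁻¹ : ℝ) ^ n := hclose b a n hb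
      _ < ev := by linarith
  refine ⟨Set.range f, ⟨f (fun _ => false), Set.mem_range_self _⟩, ⟨?_, ?_⟩, ?_⟩
  · exact (isCompact_range hcont).isClosed
  · rintro x ⟨a, rfl⟩
    rw [accPt_iff_nhds]
    intro U hU
    obtain ⟨ev, hev, hballU⟩ := Metric.mem_nhds_iff.mp hU
    obtain ⟨k, hk⟩ : ∃ k : ℕ, (2⁻¹ : ℝ) ^ k < ev / 2 :=
      exists_pow_lt_of_lt_one (by linarith) (by norm_num)
    set b : ℕ → Bool := Function.update a k (!(a k)) with hbDef
    have hba : b ≠ a := by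
      intro h
      have h2 := congrFun h k
      simp only [hbDef, Function.update_self] at h2
      exact Bool.not_ne_self _ h2
    have hdist : dist (f b) (f a) ≤ 2 * (2⁻¹ : ℝ) ^ k := by
      refine hclose b a k (fun i hi => ?_)
      simp only [hbDef]
      exact Function.update_of_ne (Nat.ne_of_lt hi) _ _
    refine ⟨f b, ⟨hballU ?_, Set.mem_range_self b⟩, fun h => hba (hinj h)⟩
    exact Metric.mem_ball.mpr (lt_of_le_of_lt hdist (by linarith))
  · rintro x ⟨a, rfl⟩ y ⟨b, rfl⟩ hxy
    exact hnE a b (fun h => hxy (by rw [h]))
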